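/- In the setting of the contraction above, the fixed point W = W(U⁰, h) satisfies the projection-error estimate: if W_m solves the projected stage equation W_m = e^{chA}P_m U⁰ + h a(hA) P_m B(W_m) with the same bounds, U⁰ ∈ Y_ℓ with ‖U⁰‖_{Y_ℓ} ≤ R/2, B maps the R-ball of Y_ℓ into Y_ℓ with bound M_ℓ, ‖Q_m‖_{Y_ℓ → Y} ≤ m^{−ℓ} and h M_a M′ < 1, then ‖W(U⁰,h) − W_m(U⁰,h)‖_Y ≤ (m^{−ℓ} R/2 + h M_a m^{−ℓ} M_ℓ)/(1 − h M_a M′). -/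

import Mathlib

/- Statement 5: projection error for the fixed points of the stage equation and of its
Galerkin truncation.  `E = e^{chA}` (contraction), `L = a(hA)` (`‖L‖ ≤ M_a`), `P = P_m`
(the spectral projection, a contraction), `Nℓ` the `Y_ℓ` norm with
`‖U − P U‖_Y ≤ m^{−ℓ} ‖U‖_{Y_ℓ}`, `B` Lipschitz with constant `M'` on the `R`-ball of
`Y` and bounded by `M_ℓ` from the `R`-ball of `Y_ℓ` to `Y_ℓ`. -/

open Metric

theorem stmt5 {Y : Type*} [NormedAddCommGroup Y] [NormedSpace ℝ Y]
    (E L P : Y →L[ℝ] Y) (B : Y → Y) (Nℓ : Y → ℝ)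
    (U0 W Wm : Y) (R h Ma Mℓ M' m ℓ : ℝ)
    (hh : 0 ≤ h) (hm : 1 ≤ m)
    (hE : ‖E‖ ≤ 1) (hL : ‖L‖ ≤ Ma) (hP : ‖P‖ ≤ 1)
    (hQ : ∀ U : Y, ‖U - P U‖ ≤ m ^ (-ℓ) * Nℓ U)
    (hLip : ∀ x ∈ closedBall (0 : Y) R, ∀ y ∈ closedBall (0 : Y) R,
      ‖B x - B y‖ ≤ M' * ‖x - y‖)
    (hBl : ∀ U : Y, Nℓ U ≤ R → Nℓ (B U) ≤ Mℓ)
    (hU0 : Nℓ U0 ≤ R / 2)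
    (hWfix : W = E U0 + h • L (B W))
    (hWmfix : Wm = E (P U0) + h • L (P (B Wm)))
    (hWball : ‖W‖ ≤ R) (hWmball : ‖Wm‖ ≤ R) (hWl : Nℓ W ≤ R)
    (hcontr : h * Ma * M' < 1) :
    ‖W - Wm‖ ≤ (m ^ (-ℓ) * (R / 2) + h * Ma * m ^ (-ℓ) * Mℓ) / (1 - h * Ma * M') := by
  have hMa : 0 ≤ Ma := le_trans (norm_nonneg L) hL
  have hmpos : (0:ℝ) < m ^ (-ℓ) := Real.rpow_pos_of_pos (by linarith) _
  have hmnn : (0:ℝ) ≤ m ^ (-ℓ) := le_of_lt hmpos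
  have key : W - Wm = E (U0 - P U0)
      + h • L ((B W - P (B W)) + P (B W - B Wm)) := by
    have := congrArg₂ (fun a b : Y => a - b) hWfix hWmfix
    rw [this]
    simp only [map_sub, map_add, smul_add, smul_sub]
    abel
  have n1 : ‖E (U0 - P U0)‖ ≤ m ^ (-ℓ) * (R / 2) := by
    calc ‖E (U0 - P U0)‖ ≤ ‖E‖ * ‖U0 - P U0‖ := E.le_opNorm _
      _ ≤ 1 * ‖U0 - P U0‖ := by
          exact mul_le_mul_of_nonneg_right hE (norm_nonneg _)
      _ = ‖U0 - P U0‖ := one_mul _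
      _ ≤ m ^ (-ℓ) * Nℓ U0 := hQ U0
      _ ≤ m ^ (-ℓ) * (R / 2) := mul_le_mul_of_nonneg_left hU0 hmnn
  have n2 : ‖B W - P (B W)‖ ≤ m ^ (-ℓ) * Mℓ :=
    le_trans (hQ (B W)) (mul_le_mul_of_nonneg_left (hBl W hWl) hmnn)
  have n3 : ‖P (B W - B Wm)‖ ≤ M' * ‖W - Wm‖ := by
    calc ‖P (B W - B Wm)‖ ≤ ‖P‖ * ‖B W - B Wm‖ := P.le_opNorm _
      _ ≤ 1 * ‖B W - B Wm‖ := mul_le_mul_of_nonneg_right hP (norm_nonneg _)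
      _ = ‖B W - B Wm‖ := one_mul _
      _ ≤ M' * ‖W - Wm‖ := by
          exact hLip W (by simpa [mem_closedBall, dist_zero_right] using hWball)
            Wm (by simpa [mem_closedBall, dist_zero_right] using hWmball)
  have nL : ‖L ((B W - P (B W)) + P (B W - B Wm))‖
      ≤ Ma * (m ^ (-ℓ) * Mℓ + M' * ‖W - Wm‖) := by
    calc ‖L ((B W - P (B W)) + P (B W - B Wm))‖
        ≤ ‖L‖ * ‖(B W - P (B W)) + P (B W - B Wm)‖ := L.le_opNorm _
      _ ≤ Ma * ‖(B W - P (B W)) + P (B W - B Wm)‖ :=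
          mul_le_mul_of_nonneg_right hL (norm_nonneg _)
      _ ≤ Ma * (m ^ (-ℓ) * Mℓ + M' * ‖W - Wm‖) := by
          apply mul_le_mul_of_nonneg_left _ hMa
          exact le_trans (norm_add_le _ _) (add_le_add n2 n3)
  have main : ‖W - Wm‖ ≤ m ^ (-ℓ) * (R / 2)
      + h * (Ma * (m ^ (-ℓ) * Mℓ + M' * ‖W - Wm‖)) := by
    calc ‖W - Wm‖ = ‖E (U0 - P U0) + h • L ((B W - P (B W)) + P (B W - B Wm))‖ := by
          rw [← key]
      _ ≤ ‖E (U0 - P U0)‖ + ‖h • L ((B W - P (B W)) + P (B W - B Wm))‖ :=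
          norm_add_le _ _
      _ ≤ m ^ (-ℓ) * (R / 2) + h * (Ma * (m ^ (-ℓ) * Mℓ + M' * ‖W - Wm‖)) := by
          apply add_le_add n1
          rw [norm_smul, Real.norm_of_nonneg hh]
          exact mul_le_mul_of_nonneg_left nL hh
  rw [le_div_iff₀ (by linarith)]
  nlinarith [norm_nonneg (W - Wm)]
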